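/- Let f be a nonnegative H-smooth function on a real normed vector space W (i.e., f is differentiable and its gradient/Fréchet derivative is H-Lipschitz in the dual norm). Then for every w ∈ W, ‖∇f(w)‖_* ≤ √(4 H f(w)). -/

import Mathlib

open Set

/-- Descent lemma: `f (w + u) ≤ f w + f' w u + H/2 * ‖u‖²`. -/
lemma descent_lemma
    {W : Type*} [NormedAddCommGroup W] [NormedSpace ℝ W]
    (f : W → ℝ) (f' : W → (W →L[ℝ] ℝ)) (H : ℝ)
    (hderiv : ∀ w, HasFDerivAt f (f' w) w)
    (hlip : ∀ w w', ‖f' w - f' w'‖ ≤ H * ‖w - w'‖) (w u : W) :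
    f (w + u) ≤ f w + f' w u + H / 2 * ‖u‖ ^ 2 := by
  set φ : ℝ → ℝ := fun t => f (w + t • u) - t * f' w u - f w with hφ
  have hc : ∀ t : ℝ, HasDerivAt (fun s : ℝ => w + s • u) u t := by
    intro t
    simpa using ((hasDerivAt_id t).smul_const u).const_add w
  have hφ' : ∀ t : ℝ, HasDerivAt φ (f' (w + t • u) u - f' w u) t := by
    intro t
    have h1 : HasDerivAt (fun s : ℝ => f (w + s • u)) (f' (w + t • u) u) t := by
      exact (hderiv (w + t • u)).comp_hasDerivAt t (hc t)
    simpa [mul_comm, hφ] using (h1.sub ((hasDerivAt_id t).const_mul (f' w u))).sub_const (f w)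
  have key : ∀ x ∈ Icc (0:ℝ) 1, ‖φ x‖ ≤ H / 2 * ‖u‖ ^ 2 * x ^ 2 := by
    refine image_norm_le_of_norm_deriv_right_le_deriv_boundary
      (f := φ) (f' := fun t => f' (w + t • u) u - f' w u)
      (B := fun t => H / 2 * ‖u‖ ^ 2 * t ^ 2) (B' := fun t => H * ‖u‖ ^ 2 * t)
      (fun x _ => (hφ' x).continuousAt.continuousWithinAt)
      (fun x _ => (hφ' x).hasDerivWithinAt) (by simp [hφ]) ?_ ?_
    · intro x
      have := ((hasDerivAt_pow 2 x).const_mul (H / 2 * ‖u‖ ^ 2))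
      refine this.congr_deriv ?_
      push_cast
      ring
    · intro x hx
      have h1 : ‖f' (w + x • u) u - f' w u‖ ≤ ‖f' (w + x • u) - f' w‖ * ‖u‖ := by
        simpa using (f' (w + x • u) - f' w).le_opNorm u
      have h2 : ‖f' (w + x • u) - f' w‖ ≤ H * ‖x • u‖ := by
        simpa using hlip (w + x • u) w
      have h3 : ‖x • u‖ = x * ‖u‖ := by
        rw [norm_smul, Real.norm_eq_abs, abs_of_nonneg hx.1]
      calc ‖f' (w + x • u) u - f' w u‖ ≤ H * ‖x • u‖ * ‖u‖ :=
            h1.trans (mul_le_mul_of_nonneg_right h2 (norm_nonneg u))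
        _ = H * ‖u‖ ^ 2 * x := by rw [h3]; ring
  have := key 1 (by norm_num)
  have h4 : φ 1 ≤ H / 2 * ‖u‖ ^ 2 := by
    calc φ 1 ≤ ‖φ 1‖ := le_abs_self _
      _ ≤ H / 2 * ‖u‖ ^ 2 * 1 ^ 2 := this
      _ = H / 2 * ‖u‖ ^ 2 := by ring
  simp only [hφ, one_smul, one_mul] at h4
  linarith

theorem smooth_self_bounding_grad
    {W : Type*} [NormedAddCommGroup W] [NormedSpace ℝ W]
    (f : W → ℝ) (f' : W → (W →L[ℝ] ℝ)) (H : ℝ) (hH : 0 ≤ H)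
    (hderiv : ∀ w, HasFDerivAt f (f' w) w)
    (hnn : ∀ w, 0 ≤ f w)
    (hlip : ∀ w w', ‖f' w - f' w'‖ ≤ H * ‖w - w'‖) :
    ∀ w, ‖f' w‖ ≤ Real.sqrt (4 * H * f w) := by
  intro w
  have key : ∀ u : W, |f' w u| ≤ Real.sqrt (2 * H * f w) * ‖u‖ := by
    intro u
    have hq : ∀ t : ℝ, 0 ≤ (H / 2 * ‖u‖ ^ 2) * (t * t) + (f' w u) * t + f w := by
      intro t
      have := descent_lemma f f' H hderiv hlip w (t • u)
      have h0 : 0 ≤ f (w + t • u) := hnn _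
      have h1 : f' w (t • u) = t * f' w u := by simp
      have h2 : ‖t • u‖ ^ 2 = t ^ 2 * ‖u‖ ^ 2 := by
        rw [norm_smul, Real.norm_eq_abs, mul_pow, sq_abs]
      nlinarith [this, h0]
    have hd := discrim_le_zero hq
    rw [discrim] at hd
    have hsq : (f' w u) ^ 2 ≤ 2 * H * f w * ‖u‖ ^ 2 := by nlinarith
    have h5 : |f' w u| = Real.sqrt ((f' w u) ^ 2) := (Real.sqrt_sq_eq_abs _).symm
    rw [h5]
    calc Real.sqrt ((f' w u) ^ 2) ≤ Real.sqrt (2 * H * f w * ‖u‖ ^ 2) :=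
          Real.sqrt_le_sqrt hsq
      _ = Real.sqrt (2 * H * f w) * ‖u‖ := by
          rw [Real.sqrt_mul (by nlinarith [hnn w] : (0:ℝ) ≤ 2 * H * f w), Real.sqrt_sq (norm_nonneg u)]
  have h6 : ‖f' w‖ ≤ Real.sqrt (2 * H * f w) :=
    (f' w).opNorm_le_bound (Real.sqrt_nonneg _) fun u => by
      simpa [Real.norm_eq_abs] using key u
  refine h6.trans (Real.sqrt_le_sqrt ?_)
  nlinarith [hnn w]
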